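/- Let n be a positive integer and let G be a graph on n + 1 vertices with chromatic number n. Then G contains the complete graph K_n as a subgraph. -/

import Mathlib

open SimpleGraph

lemma colorable_of_two_nonedges {V : Type} [Fintype V] [DecidableEq V] {G : SimpleGraph V}
    {u v a b : V} (huv : ¬G.Adj u v) (hab : ¬G.Adj a b)
    (hua : u ≠ a) (hub : u ≠ b) (hva : v ≠ a) (hvb : v ≠ b)
    (huv' : u ≠ v) (hab' : a ≠ b) :
    G.Colorable (Fintype.card V - 2) := by
  have hcard : Fintype.card {w : V // w ≠ v ∧ w ≠ b} = Fintype.card V - 2 := by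
    have h1 : (Finset.univ.filter fun w : V => w ≠ v ∧ w ≠ b)
        = (Finset.univ.erase v).erase b := by
      ext w; simp [and_comm]
    rw [Fintype.card_subtype, h1,
      Finset.card_erase_of_mem (by simp [Finset.mem_erase, Ne.symm hvb]),
      Finset.card_erase_of_mem (Finset.mem_univ v), Finset.card_univ]
    omega
  have C : G.Coloring {w : V // w ≠ v ∧ w ≠ b} := by
    refine Coloring.mk
      (fun w => if h : w = v then ⟨u, huv', hub⟩ else if h2 : w = b then ⟨a, hva.symm, hab'⟩
        else ⟨w, h, h2⟩) ?_
    intro w1 w2 hadj heq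
    have hval := congrArg Subtype.val heq
    split_ifs at hval <;> subst_vars <;>
      first
        | exact G.irrefl hadj
        | exact huv hadj
        | exact huv hadj.symm
        | exact hab hadj
        | exact hab hadj.symm
        | exact hua hval
        | exact hua hval.symm
        | exact hua rfl
        | exact hub rfl
        | exact hva rfl
        | exact hvb rfl
        | exact huv' rfl
        | exact hab' rfl
  exact hcard ▸ C.colorable

lemma colorable_of_nontriangle {V : Type} [Fintype V] [DecidableEq V] {G : SimpleGraph V}
    {p q r : V} (hpq : ¬G.Adj p q) (hpr : ¬G.Adj p r) (hqr : ¬G.Adj q r)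
    (hpq' : p ≠ q) (hpr' : p ≠ r) (hqr' : q ≠ r) :
    G.Colorable (Fintype.card V - 2) := by
  have hcard : Fintype.card {w : V // w ≠ q ∧ w ≠ r} = Fintype.card V - 2 := by
    have h1 : (Finset.univ.filter fun w : V => w ≠ q ∧ w ≠ r)
        = (Finset.univ.erase q).erase r := by
      ext w; simp [and_comm]
    rw [Fintype.card_subtype, h1,
      Finset.card_erase_of_mem (by simp [Finset.mem_erase, Ne.symm hqr']),
      Finset.card_erase_of_mem (Finset.mem_univ q), Finset.card_univ]
    omega
  have C : G.Coloring {w : V // w ≠ q ∧ w ≠ r} := by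
    refine Coloring.mk
      (fun w => if h : w = q then ⟨p, hpq', hpr'⟩ else if h2 : w = r then ⟨p, hpq', hpr'⟩
        else ⟨w, h, h2⟩) ?_
    intro w1 w2 hadj heq
    have hval := congrArg Subtype.val heq
    split_ifs at hval <;> subst_vars <;>
      first
        | exact G.irrefl hadj
        | exact hpq hadj
        | exact hpq hadj.symm
        | exact hpr hadj
        | exact hpr hadj.symm
        | exact hqr hadj
        | exact hqr hadj.symm
        | exact hpq' rfl
        | exact hpr' rfl
        | exact hqr' rfl
  exact hcard ▸ C.colorable

/-- Every graph on `n + 1` vertices with chromatic number `n` contains the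
complete graph `K_n` as a subgraph, i.e. it has a clique on `n` vertices. -/
theorem stmt14 {V : Type} [Fintype V] (n : ℕ) (hn : 0 < n)
    (hcard : Fintype.card V = n + 1) (G : SimpleGraph V)
    (hchi : G.chromaticNumber = (n : ℕ∞)) :
    ∃ s : Finset V, G.IsNClique n s := by
  classical
  by_contra hcon
  push_neg at hcon
  have hne : Nonempty V := by
    rw [← Fintype.card_pos_iff, hcard]; omega
  -- For every vertex c, there is a non-edge avoiding c.
  have hA : ∀ c : V, ∃ a b : V, a ≠ c ∧ b ≠ c ∧ a ≠ b ∧ ¬ G.Adj a b := by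
    intro c
    have hc : (Finset.univ.erase c).card = n := by
      rw [Finset.card_erase_of_mem (Finset.mem_univ c), Finset.card_univ, hcard]
      omega
    have hnc := hcon (Finset.univ.erase c)
    rw [SimpleGraph.isNClique_iff] at hnc
    have hnotclique : ¬ G.IsClique (Finset.univ.erase c : Finset V) := by
      intro h; exact hnc ⟨h, hc⟩
    rw [SimpleGraph.isClique_iff, Set.Pairwise] at hnotclique
    push_neg at hnotclique
    obtain ⟨a, ha, b, hb, hab, hnadj⟩ := hnotclique
    simp only [Finset.coe_erase, Set.mem_diff, Finset.coe_univ, Set.mem_univ, true_and,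
      Set.mem_singleton_iff] at ha hb
    exact ⟨a, b, ha, hb, hab, hnadj⟩
  have key : G.Colorable (Fintype.card V - 2) := by
    obtain ⟨c⟩ := hne
    obtain ⟨u, v, -, -, huv', huv⟩ := hA c
    obtain ⟨a, b, hau, hbu, hab', hab⟩ := hA u
    by_cases hva : v = a
    · subst hva
      -- non-edges (u,v) and (v,b); find a non-edge avoiding v
      obtain ⟨x, y, hxv, hyv, hxy', hxy⟩ := hA v
      by_cases hxu : x = u
      · subst hxu
        by_cases hyb : y = b
        · subst hyb
          exact colorable_of_nontriangle huv hxy hab huv' hxy' hab'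
        · exact colorable_of_two_nonedges hab hxy hau (Ne.symm hyv) hbu
            (fun h => hyb h.symm) hab' hxy'
      · by_cases hxb : x = b
        · subst hxb
          by_cases hyu : y = u
          · subst hyu
            exact colorable_of_nontriangle huv (fun h => hxy h.symm) hab huv'
              hxy'.symm hab'
          · exact colorable_of_two_nonedges huv hxy (Ne.symm hbu)
              (fun h => hyu h.symm) hab' (Ne.symm hyv) huv' hxy'
        · by_cases hyu : y = u
          · subst hyu
            exact colorable_of_two_nonedges hab hxy (Ne.symm hxv) hau
              (fun h => hxb h.symm) hbu hab' hxy'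
          · by_cases hyb : y = b
            · subst hyb
              exact colorable_of_two_nonedges huv hxy (fun h => hxu h.symm)
                (Ne.symm hbu) (Ne.symm hxv) hab' huv' hxy'
            · exact colorable_of_two_nonedges huv hxy (fun h => hxu h.symm)
                (fun h => hyu h.symm) (Ne.symm hxv) (Ne.symm hyv) huv' hxy'
    · by_cases hvb : v = b
      · subst hvb
        -- non-edges (u,v) and (a,v)
        have hab2 : ¬ G.Adj v a := fun h => hab h.symm
        obtain ⟨x, y, hxv, hyv, hxy', hxy⟩ := hA v
        by_cases hxu : x = u
        · subst hxu
          by_cases hya : y = a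
          · subst hya
            exact colorable_of_nontriangle huv hxy hab2 huv' hxy' (Ne.symm hab')
          · exact colorable_of_two_nonedges hab2 hxy hbu (Ne.symm hyv) hau
              (fun h => hya h.symm) (Ne.symm hab') hxy'
        · by_cases hxa : x = a
          · subst hxa
            by_cases hyu : y = u
            · subst hyu
              exact colorable_of_nontriangle huv (fun h => hxy h.symm) hab2 huv'
                hxy'.symm (Ne.symm hab')
            · exact colorable_of_two_nonedges huv hxy (Ne.symm hau)
                (fun h => hyu h.symm) (Ne.symm hab') (Ne.symm hyv) huv' hxy'
          · by_cases hyu : y = u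
            · subst hyu
              exact colorable_of_two_nonedges hab2 hxy (Ne.symm hxv) hbu
                (fun h => hxa h.symm) hau (Ne.symm hab') hxy'
            · by_cases hya : y = a
              · subst hya
                exact colorable_of_two_nonedges huv hxy (fun h => hxu h.symm)
                  (Ne.symm hau) (Ne.symm hxv) (Ne.symm hab') huv' hxy'
              · exact colorable_of_two_nonedges huv hxy (fun h => hxu h.symm)
                  (fun h => hyu h.symm) (Ne.symm hxv) (Ne.symm hyv) huv' hxy'
      · exact colorable_of_two_nonedges huv hab (Ne.symm hau) (Ne.symm hbu)
          hva hvb huv' hab'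
  rw [hcard] at key
  have hle := key.chromaticNumber_le
  rw [hchi] at hle
  have : n ≤ n + 1 - 2 := by exact_mod_cast hle
  omega
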